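/- Kullback–Leibler divergence bounded by squared Hellinger distance under a bounded likelihood ratio. For every B ≥ 1 there exists a constant C = C(B) > 0 such that for all probability densities p₀ and q on a σ-finite measure space (Ω, μ) satisfying p₀ ≤ B q μ-almost everywhere, one has d_K(p₀, q) ≤ C · d_H²(p₀, q). -/

import Mathlib

open MeasureTheory Real

/-- A (probability) density on `(Ω, μ)`: a nonnegative measurable function integrating to 1. -/
def IsDensity {Ω : Type*} [MeasurableSpace Ω] (μ : Measure Ω) (p : Ω → ℝ) : Prop :=
  Measurable p ∧ (∀ x, 0 ≤ p x) ∧ Integrable p μ ∧ ∫ x, p x ∂μ = 1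

/-- Squared Hellinger distance `d_H²(p, q) = ∫ (√p − √q)² dμ`. -/
noncomputable def hellSq {Ω : Type*} [MeasurableSpace Ω] (μ : Measure Ω) (p q : Ω → ℝ) : ℝ :=
  ∫ x, (Real.sqrt (p x) - Real.sqrt (q x)) ^ 2 ∂μ

/-- Kullback–Leibler divergence `d_K(p, q) = ∫ p log(p/q) dμ`. -/
noncomputable def klD {Ω : Type*} [MeasurableSpace Ω] (μ : Measure Ω) (p q : Ω → ℝ) : ℝ :=
  ∫ x, p x * Real.log (p x / q x) ∂μ

lemma aux_nonneg {B p q : ℝ} (hp : 0 ≤ p) (hq : 0 ≤ q)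
    (hpq : p ≤ B * q) : 0 ≤ p * Real.log (p / q) + q - p := by
  rcases eq_or_lt_of_le hq with hq0 | hq0
  · have hq0 : q = 0 := hq0.symm
    have hp0 : p = 0 := le_antisymm (by simpa [hq0] using hpq) hp
    simp [hp0, hq0]
  rcases eq_or_lt_of_le hp with hp0 | hp0
  · rw [← hp0]; simp; linarith
  · have h1 : Real.log (q / p) ≤ q / p - 1 := Real.log_le_sub_one_of_pos (by positivity)
    have h2 : Real.log (p / q) = - Real.log (q / p) := by
      rw [← Real.log_inv]; congr 1; field_simp
    have h3 : p - q ≤ p * Real.log (p / q) := by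
      rw [h2]
      have h4 := mul_le_mul_of_nonneg_left h1 hp
      have h5 : p * (q / p) = q := by field_simp
      nlinarith
    linarith

lemma aux_ptwise {B p q : ℝ} (hB : 1 ≤ B) (hp : 0 ≤ p) (hq : 0 ≤ q)
    (hpq : p ≤ B * q) :
    p * Real.log (p / q) + q - p ≤
      (2 * Real.sqrt B + 1) * (Real.sqrt p - Real.sqrt q) ^ 2 := by
  have hsB : 1 ≤ Real.sqrt B := by
    rw [show (1:ℝ) = Real.sqrt 1 by simp]; exact Real.sqrt_le_sqrt hB
  rcases eq_or_lt_of_le hq with hq0 | hq0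
  · have hq0 : q = 0 := hq0.symm
    have hp0 : p = 0 := le_antisymm (by nlinarith [hq0 ▸ hpq]) hp
    simp [hp0, hq0]
  rcases eq_or_lt_of_le hp with hp0 | hp0
  · rw [← hp0]
    have h2 : Real.sqrt q ^ 2 = q := Real.sq_sqrt hq
    simp only [Real.sqrt_zero, zero_mul, zero_add, zero_sub, neg_sq, sub_zero]
    nlinarith
  · set a := Real.sqrt p with ha
    set b := Real.sqrt q with hb
    have ha2 : a ^ 2 = p := Real.sq_sqrt hp
    have hb2 : b ^ 2 = q := Real.sq_sqrt hq
    have ha0 : 0 < a := Real.sqrt_pos.2 hp0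
    have hb0 : 0 < b := Real.sqrt_pos.2 hq0
    have hab : a ≤ Real.sqrt B * b := by
      rw [ha, hb, ← Real.sqrt_mul (by linarith : (0:ℝ) ≤ B)]
      exact Real.sqrt_le_sqrt hpq
    have hlog : Real.log (p / q) ≤ 2 * (a / b - 1) := by
      have h1 : p / q = (a / b) ^ 2 := by
        rw [div_pow, ha2, hb2]
      rw [h1, Real.log_pow]
      have := Real.log_le_sub_one_of_pos (show (0:ℝ) < a / b by positivity)
      push_cast
      linarith
    have h2 : p * Real.log (p / q) ≤ p * (2 * (a / b - 1)) :=
      mul_le_mul_of_nonneg_left hlog hp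
    have h3 : p * (2 * (a / b - 1)) + q - p ≤
        (2 * Real.sqrt B + 1) * (a - b) ^ 2 := by
      rw [← ha2, ← hb2]
      have key : a ^ 2 * (2 * (a / b - 1)) = 2 * a ^ 2 * (a - b) / b := by
        field_simp
      rw [key, div_add' _ _ _ hb0.ne', div_sub' hb0.ne', div_le_iff₀ hb0]
      nlinarith [mul_nonneg (sub_nonneg.2 hab) (sq_nonneg (a - b)), sq_nonneg (a - b)]
    linarith

/-- Kullback–Leibler divergence bounded by squared Hellinger distance under a bounded
likelihood ratio. -/
theorem kl_le_const_mul_hellSq_of_bounded_ratio.{u} (B : ℝ) (hB : 1 ≤ B) :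
    ∃ C : ℝ, 0 < C ∧
      ∀ (Ω : Type u) [MeasurableSpace Ω] (μ : Measure Ω) [SigmaFinite μ] (p₀ q : Ω → ℝ),
        IsDensity μ p₀ → IsDensity μ q → (∀ᵐ x ∂μ, p₀ x ≤ B * q x) →
          klD μ p₀ q ≤ C * hellSq μ p₀ q := by
  refine ⟨2 * Real.sqrt B + 1, by positivity, ?_⟩
  intro Ω _ μ _ p₀ q hp₀ hq hpq
  obtain ⟨hp₀m, hp₀nn, hp₀i, hp₀one⟩ := hp₀
  obtain ⟨hqm, hqnn, hqi, hqone⟩ := hq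
  set C : ℝ := 2 * Real.sqrt B + 1 with hC
  have hCpos : 0 < C := by positivity
  set h : Ω → ℝ := fun x => (Real.sqrt (p₀ x) - Real.sqrt (q x)) ^ 2 with hh
  set f : Ω → ℝ := fun x => p₀ x * Real.log (p₀ x / q x) with hf
  set g : Ω → ℝ := fun x => f x + q x - p₀ x with hg
  have hhm : Measurable h := (hp₀m.sqrt.sub hqm.sqrt).pow_const 2
  have hhi : Integrable h μ := by
    refine Integrable.mono' ((hp₀i.const_mul 2).add (hqi.const_mul 2))
      hhm.aestronglyMeasurable ?_
    filter_upwards with x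
    have h1 : Real.sqrt (p₀ x) ^ 2 = p₀ x := Real.sq_sqrt (hp₀nn x)
    have h2 : Real.sqrt (q x) ^ 2 = q x := Real.sq_sqrt (hqnn x)
    rw [Real.norm_eq_abs, abs_of_nonneg (sq_nonneg _)]
    simp only [Pi.add_apply, hh]
    nlinarith [sq_nonneg (Real.sqrt (p₀ x) + Real.sqrt (q x))]
  have hgm : Measurable g :=
    ((hp₀m.mul ((hp₀m.div hqm).log)).add hqm).sub hp₀m
  have hgle : ∀ᵐ x ∂μ, g x ≤ C * h x := by
    filter_upwards [hpq] with x hx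
    exact aux_ptwise hB (hp₀nn x) (hqnn x) hx
  have hgnn : ∀ᵐ x ∂μ, 0 ≤ g x := by
    filter_upwards [hpq] with x hx
    exact aux_nonneg (hp₀nn x) (hqnn x) hx
  have hgi : Integrable g μ := by
    refine Integrable.mono' (hhi.const_mul C) hgm.aestronglyMeasurable ?_
    filter_upwards [hgle, hgnn] with x h1 h2
    rw [Real.norm_eq_abs, abs_of_nonneg h2]
    exact h1
  have hfi : Integrable f μ := by
    have : f = fun x => g x + p₀ x - q x := by
      ext x; simp only [hg]; ring
    rw [this]
    exact (hgi.add hp₀i).sub hqi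
  have hkl : klD μ p₀ q = ∫ x, g x ∂μ := by
    have e1 := integral_sub (hfi.add hqi) hp₀i
    have e2 := integral_add hfi hqi
    simp only [Pi.add_apply] at e1 e2
    have : ∫ x, g x ∂μ = (∫ x, f x ∂μ) + (∫ x, q x ∂μ) - ∫ x, p₀ x ∂μ := by
      simp only [hg]
      rw [e1, e2]
    rw [this, hp₀one, hqone]
    simp only [klD, hf]
    ring
  have hint : ∫ x, g x ∂μ ≤ ∫ x, C * h x ∂μ :=
    integral_mono_ae hgi (hhi.const_mul C) hgle
  rw [hkl]
  calc ∫ x, g x ∂μ ≤ ∫ x, C * h x ∂μ := hint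
    _ = C * hellSq μ p₀ q := by rw [integral_const_mul]; rfl
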